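/- For every n ≥ 0, as r → 0⁺ one has Φ_n′(r) + 1/r − ln(1/r) [ I₀(γr) ṽ_n(r) − I₁(γr) w̃_n(r) ] = O(r), i.e. there exist δ > 0 and a constant c₀ ≥ 0 such that the absolute value of the left-hand side is at most c₀ r for all 0 < r < δ; here ṽ_n(r) = 2 Σ_{k=1}^{⌊n/2⌋} k a_{n,2k} r^{2k−1} − γ w_n(r) and w̃_n(r) = 2 Σ_{k=1}^{⌊(n−1)/2⌋} k a_{n,2k+1} r^{2k} − γ v_n(r). -/

import Mathlib

open Real Filter

/-- `I₀(z) = Σ_{n=0}^∞ (z/2)^{2n}/(n!)²`. -/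
noncomputable def besselI0 (z : ℝ) : ℝ :=
  ∑' n : ℕ, (z / 2) ^ (2 * n) / (Nat.factorial n : ℝ) ^ 2

/-- `I₁(z) = Σ_{n=0}^∞ (z/2)^{2n+1}/(n!(n+1)!)`. -/
noncomputable def besselI1 (z : ℝ) : ℝ :=
  ∑' n : ℕ, (z / 2) ^ (2 * n + 1) / ((Nat.factorial n : ℝ) * (Nat.factorial (n + 1) : ℝ))

/-- `ψ(0) = 0`, `ψ(n) = Σ_{m=1}^n 1/m`. -/
noncomputable def psiHarm (n : ℕ) : ℝ := ∑ m ∈ Finset.Icc 1 n, (1 / m : ℝ)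

/-- `K₀(z) = −(ln(z/2) + C) I₀(z) + Σ_{n=1}^∞ (ψ(n)/(n!)²) (z/2)^{2n}`. -/
noncomputable def besselK0 (z : ℝ) : ℝ :=
  -(Real.log (z / 2) + Real.eulerMascheroniConstant) * besselI0 z +
    ∑' n : ℕ, psiHarm (n + 1) / (Nat.factorial (n + 1) : ℝ) ^ 2 * (z / 2) ^ (2 * (n + 1))

/-- `K₁(z) = 1/z + (ln(z/2) + C) I₁(z) − (1/2) Σ_{n=0}^∞ ((ψ(n+1)+ψ(n))/(n!(n+1)!)) (z/2)^{2n+1}`. -/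
noncomputable def besselK1 (z : ℝ) : ℝ :=
  1 / z + (Real.log (z / 2) + Real.eulerMascheroniConstant) * besselI1 z -
    (1 / 2) * ∑' n : ℕ, (psiHarm (n + 1) + psiHarm n) /
      ((Nat.factorial n : ℝ) * (Nat.factorial (n + 1) : ℝ)) * (z / 2) ^ (2 * n + 1)

/-- `β_n = κ²(n+1)/c²`. -/
noncomputable def betaC (κ c : ℝ) (n : ℕ) : ℝ := κ ^ 2 * (n + 1) / c ^ 2

/-- `γ = κ/c`. -/
noncomputable def gammaC (κ c : ℝ) : ℝ := κ / c

/-- `v_n(r) = Σ_{k=0}^{⌊n/2⌋} a_{n,2k} r^{2k}`. -/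
noncomputable def vPoly (a : ℕ → ℕ → ℝ) (n : ℕ) (r : ℝ) : ℝ :=
  ∑ k ∈ Finset.range (n / 2 + 1), a n (2 * k) * r ^ (2 * k)

/-- `w_n(r) = Σ_{k=0}^{⌊(n−1)/2⌋} a_{n,2k+1} r^{2k+1}` (so `w₀ = 0` since `a_{0,1} = 0`). -/
noncomputable def wPoly (a : ℕ → ℕ → ℝ) (n : ℕ) (r : ℝ) : ℝ :=
  ∑ k ∈ Finset.range ((n - 1) / 2 + 1), a n (2 * k + 1) * r ^ (2 * k + 1)

/-- `Φ_n(r) = K₀(γr) v_n(r) + K₁(γr) w_n(r)`. -/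
noncomputable def PhiFund (γ : ℝ) (a : ℕ → ℕ → ℝ) (n : ℕ) (r : ℝ) : ℝ :=
  besselK0 (γ * r) * vPoly a n r + besselK1 (γ * r) * wPoly a n r

/-- `ṽ_n(r) = 2 Σ_{k=1}^{⌊n/2⌋} k a_{n,2k} r^{2k−1} − γ w_n(r)`. -/
noncomputable def vTilde (γ : ℝ) (a : ℕ → ℕ → ℝ) (n : ℕ) (r : ℝ) : ℝ :=
  2 * ∑ k ∈ Finset.Icc 1 (n / 2), (k : ℝ) * a n (2 * k) * r ^ (2 * k - 1) - γ * wPoly a n r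

/-- `w̃_n(r) = 2 Σ_{k=1}^{⌊(n−1)/2⌋} k a_{n,2k+1} r^{2k} − γ v_n(r)`. -/
noncomputable def wTilde (γ : ℝ) (a : ℕ → ℕ → ℝ) (n : ℕ) (r : ℝ) : ℝ :=
  2 * ∑ k ∈ Finset.Icc 1 ((n - 1) / 2), (k : ℝ) * a n (2 * k + 1) * r ^ (2 * k) -
    γ * vPoly a n r

/-- `v̄_n(r) = 2 Σ_{k=1}^{⌊n/2⌋} k(2k−1) a_{n,2k} r^{2k−2}
  − γ Σ_{k=0}^{⌊(n−1)/2⌋} (2k+1) a_{n,2k+1} r^{2k} − γ w̃_n(r)`. -/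
noncomputable def vBar (γ : ℝ) (a : ℕ → ℕ → ℝ) (n : ℕ) (r : ℝ) : ℝ :=
  2 * ∑ k ∈ Finset.Icc 1 (n / 2), (k : ℝ) * (2 * k - 1 : ℝ) * a n (2 * k) * r ^ (2 * k - 2) -
    γ * ∑ k ∈ Finset.range ((n - 1) / 2 + 1), (2 * k + 1 : ℝ) * a n (2 * k + 1) * r ^ (2 * k) -
    γ * wTilde γ a n r

/-- `w̄_n(r) = 4 Σ_{k=1}^{⌊(n−1)/2⌋} k² a_{n,2k+1} r^{2k}
  − 2γ Σ_{k=1}^{⌊n/2⌋} k a_{n,2k} r^{2k} − γ r ṽ_n(r) − w̃_n(r)`. -/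
noncomputable def wBar (γ : ℝ) (a : ℕ → ℕ → ℝ) (n : ℕ) (r : ℝ) : ℝ :=
  4 * ∑ k ∈ Finset.Icc 1 ((n - 1) / 2), (k : ℝ) ^ 2 * a n (2 * k + 1) * r ^ (2 * k) -
    2 * γ * ∑ k ∈ Finset.Icc 1 (n / 2), (k : ℝ) * a n (2 * k) * r ^ (2 * k) -
    γ * r * vTilde γ a n r - wTilde γ a n r

private lemma nat_le_two_pow (n : ℕ) : (n + 1 : ℝ) ≤ 2 ^ n := by
  induction n with
  | zero => norm_num
  | succ k ih =>
      rw [pow_succ]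
      push_cast
      nlinarith [ih, pow_nonneg (by norm_num : (0:ℝ) ≤ 2) k]

private lemma summable_abs_of_le (d : ℕ → ℝ) (K A : ℝ)
    (h : ∀ n, |d n| ≤ K * A ^ n / n.factorial) : Summable fun n => |d n| := by
  apply Summable.of_nonneg_of_le (fun n => abs_nonneg _) h
  simpa [mul_div_assoc] using (Real.summable_pow_div_factorial A).mul_left K

noncomputable def gs (d : ℕ → ℝ) (e : ℕ → ℕ) (r : ℝ) : ℝ := ∑' n, d n * r ^ e n

private lemma gs_summable (d : ℕ → ℝ) (e : ℕ → ℕ) (hd : Summable fun n => |d n|)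
    {r : ℝ} (hr : |r| ≤ 1) : Summable fun n => d n * r ^ e n := by
  apply Summable.of_abs
  apply Summable.of_nonneg_of_le (fun n => abs_nonneg _) _ hd
  intro n
  rw [abs_mul, abs_pow]
  exact mul_le_of_le_one_right (abs_nonneg _) (pow_le_one₀ (abs_nonneg _) hr)

private lemma gs_abs_le (d : ℕ → ℝ) (e : ℕ → ℕ) (hd : Summable fun n => |d n|)
    (E : ℕ) (he : ∀ n, E ≤ e n) {r : ℝ} (h0 : 0 ≤ r) (h1 : r ≤ 1) :
    |gs d e r| ≤ (∑' n, |d n|) * r ^ E := by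
  have hs : Summable fun n => |d n * r ^ e n| :=
    (gs_summable d e hd (by rwa [abs_of_nonneg h0])).abs
  calc |gs d e r| ≤ ∑' n, |d n * r ^ e n| := by
        simpa only [gs, Real.norm_eq_abs] using
          norm_tsum_le_tsum_norm (f := fun n => d n * r ^ e n) hs
    _ ≤ ∑' n, |d n| * r ^ E := by
        apply Summable.tsum_le_tsum _ hs (hd.mul_right _)
        intro n
        rw [abs_mul, abs_pow, abs_of_nonneg h0]
        exact mul_le_mul_of_nonneg_left (pow_le_pow_of_le_one h0 h1 (he n)) (abs_nonneg _)
    _ = (∑' n, |d n|) * r ^ E := tsum_mul_right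

private lemma gs_hasDerivAt (d : ℕ → ℝ) (e : ℕ → ℕ) (hd : Summable fun n => |d n|)
    (hu : Summable fun n => |d n| * e n) {x : ℝ} (hx : |x| < 1) :
    HasDerivAt (gs d e) (∑' n, d n * e n * x ^ (e n - 1)) x := by
  have hmem : ∀ {y : ℝ}, |y| < 1 → y ∈ Metric.ball (0:ℝ) 1 := by
    intro y hy; simpa [Metric.mem_ball, Real.dist_eq] using hy
  have h := hasDerivAt_tsum_of_isPreconnected (u := fun n => |d n| * e n)
    (g := fun n y => d n * y ^ e n) (g' := fun n y => d n * (e n) * y ^ (e n - 1))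
    (t := Metric.ball (0:ℝ) 1) (y₀ := 0) (y := x) hu Metric.isOpen_ball
    ((convex_ball (0:ℝ) 1).isPreconnected)
    (fun n y _ => by
      simpa [mul_assoc] using (hasDerivAt_pow (e n) y).const_mul (d n))
    (fun n y hy => by
      have hy1 : |y| < 1 := by simpa [Metric.mem_ball, Real.dist_eq] using hy
      show ‖d n * ↑(e n) * y ^ (e n - 1)‖ ≤ |d n| * e n
      rw [Real.norm_eq_abs, abs_mul, abs_mul, abs_pow, Nat.abs_cast]
      exact mul_le_of_le_one_right (by positivity) (pow_le_one₀ (abs_nonneg _) hy1.le))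
    (hmem (by norm_num))
    (gs_summable d e hd (by norm_num))
    (hmem hx)
  exact h
private lemma finsum_abs_le (s : Finset ℕ) (b : ℕ → ℝ) (e : ℕ → ℕ) (E : ℕ)
    (he : ∀ k ∈ s, E ≤ e k) {r : ℝ} (h0 : 0 ≤ r) (h1 : r ≤ 1) :
    |∑ k ∈ s, b k * r ^ e k| ≤ (∑ k ∈ s, |b k|) * r ^ E := by
  calc |∑ k ∈ s, b k * r ^ e k| ≤ ∑ k ∈ s, |b k * r ^ e k| := Finset.abs_sum_le_sum_abs _ _
    _ ≤ ∑ k ∈ s, |b k| * r ^ E := by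
        apply Finset.sum_le_sum; intro k hk
        rw [abs_mul, abs_pow, abs_of_nonneg h0]
        exact mul_le_mul_of_nonneg_left (pow_le_pow_of_le_one h0 h1 (he k hk)) (abs_nonneg _)
    _ = _ := (Finset.sum_mul _ _ _).symm

private lemma sum_Icc_eq_range (m : ℕ) (f : ℕ → ℝ) (h0 : f 0 = 0) :
    ∑ k ∈ Finset.Icc 1 m, f k = ∑ k ∈ Finset.range (m + 1), f k := by
  apply Finset.sum_subset
  · intro k hk
    rw [Finset.mem_range]
    exact Nat.lt_succ_of_le (Finset.mem_Icc.mp hk).2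
  · intro k hk hnk
    have hk0 : k = 0 := by
      rcases Nat.eq_zero_or_pos k with h | h
      · exact h
      · exact absurd (Finset.mem_Icc.mpr ⟨h, Nat.lt_succ_iff.mp (Finset.mem_range.mp hk)⟩) hnk
    rw [hk0, h0]

private lemma psiHarm_nonneg (n : ℕ) : 0 ≤ psiHarm n :=
  Finset.sum_nonneg fun m _ => by positivity

private lemma psiHarm_le (n : ℕ) : psiHarm n ≤ n := by
  unfold psiHarm
  calc ∑ m ∈ Finset.Icc 1 n, (1 / m : ℝ) ≤ ∑ m ∈ Finset.Icc 1 n, 1 := by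
        apply Finset.sum_le_sum
        intro m hm
        have h1 : 1 ≤ m := (Finset.mem_Icc.mp hm).1
        have : (1 : ℝ) ≤ m := by exact_mod_cast h1
        rw [div_le_one (by linarith)]
        exact this
    _ = n := by simp [Nat.card_Icc]

private lemma summable_abs_mul_weight (d : ℕ → ℝ) (e : ℕ → ℕ) (K A : ℝ)
    (hK : 0 ≤ K) (hA : 0 ≤ A)
    (h : ∀ k, |d k| ≤ K * A ^ k / k.factorial) (he : ∀ k, (e k : ℝ) ≤ 2 * k + 2) :
    Summable fun k => |d k| * e k := by
  have hs : Summable fun k : ℕ => 2 * K * (2 * A) ^ k / k.factorial := by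
    simpa [mul_div_assoc] using (Real.summable_pow_div_factorial (2 * A)).mul_left (2 * K)
  apply Summable.of_nonneg_of_le (fun k => by positivity) (fun k => ?_) hs
  have hek : (0:ℝ) ≤ e k := by positivity
  have h2 : (e k : ℝ) ≤ 2 * 2 ^ k := by
    calc (e k : ℝ) ≤ 2 * k + 2 := he k
      _ = 2 * (k + 1) := by ring
      _ ≤ 2 * 2 ^ k := by
          have := nat_le_two_pow k
          linarith
  calc |d k| * e k ≤ (K * A ^ k / k.factorial) * (2 * 2 ^ k) :=
        mul_le_mul (h k) h2 hek (by positivity)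
    _ = 2 * K * (2 * A) ^ k / k.factorial := by rw [mul_pow]; ring

/-- Coefficients of `I₀(γ·)`, `I₁(γ·)` and the regular parts of `K₀(γ·)`, `K₁(γ·)`
as power series in `r`. -/
noncomputable def cd0 (γ : ℝ) (k : ℕ) : ℝ := (γ / 2) ^ (2 * k) / (k.factorial : ℝ) ^ 2

noncomputable def cd1 (γ : ℝ) (k : ℕ) : ℝ :=
  (γ / 2) ^ (2 * k + 1) / ((k.factorial : ℝ) * ((k + 1).factorial : ℝ))

noncomputable def cS0 (γ : ℝ) (k : ℕ) : ℝ :=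
  psiHarm (k + 1) / ((k + 1).factorial : ℝ) ^ 2 * (γ / 2) ^ (2 * (k + 1))

noncomputable def cS1 (γ : ℝ) (k : ℕ) : ℝ :=
  (psiHarm (k + 1) + psiHarm k) / ((k.factorial : ℝ) * ((k + 1).factorial : ℝ)) *
    (γ / 2) ^ (2 * k + 1)

private lemma fact_one_le (k : ℕ) : (1 : ℝ) ≤ (k.factorial : ℝ) := by
  exact_mod_cast Nat.one_le_iff_ne_zero.mpr k.factorial_ne_zero

private lemma fact_pos' (k : ℕ) : (0 : ℝ) < (k.factorial : ℝ) := by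
  exact_mod_cast k.factorial_pos

private lemma fact_succ_cast (k : ℕ) :
    ((k + 1).factorial : ℝ) = (k + 1 : ℝ) * (k.factorial : ℝ) := by
  rw [Nat.factorial_succ]; push_cast; ring

private lemma cd0_le (γ : ℝ) (hγ : 0 < γ) (k : ℕ) :
    |cd0 γ k| ≤ 1 * ((γ / 2) ^ 2) ^ k / k.factorial := by
  have hb : (0:ℝ) < γ / 2 := by linarith
  have h1 : |cd0 γ k| = ((γ / 2) ^ 2) ^ k / (k.factorial : ℝ) ^ 2 := by
    rw [cd0, abs_of_nonneg (by positivity), ← pow_mul]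
  rw [h1, one_mul]
  apply div_le_div₀ (by positivity) le_rfl (fact_pos' k)
  nlinarith [fact_one_le k, fact_pos' k]

private lemma cd1_le (γ : ℝ) (hγ : 0 < γ) (k : ℕ) :
    |cd1 γ k| ≤ (γ / 2) * ((γ / 2) ^ 2) ^ k / k.factorial := by
  have hb : (0:ℝ) < γ / 2 := by linarith
  have h1 : |cd1 γ k| = (γ / 2) * ((γ / 2) ^ 2) ^ k /
      ((k.factorial : ℝ) * ((k + 1).factorial : ℝ)) := by
    rw [cd1, abs_of_nonneg (by positivity), pow_succ, ← pow_mul]; ring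
  rw [h1]
  apply div_le_div₀ (by positivity) le_rfl (fact_pos' k)
  nlinarith [fact_one_le k, fact_pos' k, fact_one_le (k+1), fact_pos' (k+1)]

private lemma cS0_le (γ : ℝ) (hγ : 0 < γ) (k : ℕ) :
    |cS0 γ k| ≤ (γ / 2) ^ 2 * ((γ / 2) ^ 2) ^ k / k.factorial := by
  have hb : (0:ℝ) < γ / 2 := by linarith
  have hnn : 0 ≤ cS0 γ k := by
    unfold cS0
    have := psiHarm_nonneg (k + 1)
    positivity
  rw [abs_of_nonneg hnn, cS0]
  have hpow : (γ / 2) ^ (2 * (k + 1)) = (γ / 2) ^ 2 * ((γ / 2) ^ 2) ^ k := by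
    rw [← pow_mul, ← pow_add]; congr 1; omega
  have hψ : psiHarm (k + 1) ≤ (k + 1 : ℝ) := by
    have := psiHarm_le (k + 1); push_cast at this ⊢; linarith
  have key : psiHarm (k + 1) / ((k + 1).factorial : ℝ) ^ 2 ≤ 1 / k.factorial := by
    rw [div_le_div_iff₀ (by positivity) (fact_pos' k), fact_succ_cast]
    have h1 := fact_one_le k
    have h2 := fact_pos' k
    have h3 : (0:ℝ) < (k + 1 : ℝ) := by positivity
    have h4 : (1:ℝ) ≤ (k + 1 : ℝ) * (k.factorial : ℝ) := by nlinarith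
    nlinarith [mul_le_mul_of_nonneg_right hψ h2.le, sq_nonneg ((k + 1 : ℝ) * (k.factorial : ℝ)),
      mul_pos h3 h2]
  calc psiHarm (k + 1) / ((k + 1).factorial : ℝ) ^ 2 * (γ / 2) ^ (2 * (k + 1))
      ≤ (1 / k.factorial) * (γ / 2) ^ (2 * (k + 1)) := by
        exact mul_le_mul_of_nonneg_right key (by positivity)
    _ = (γ / 2) ^ 2 * ((γ / 2) ^ 2) ^ k / k.factorial := by rw [hpow]; ring

private lemma cS1_le (γ : ℝ) (hγ : 0 < γ) (k : ℕ) :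
    |cS1 γ k| ≤ (2 * (γ / 2)) * ((γ / 2) ^ 2) ^ k / k.factorial := by
  have hb : (0:ℝ) < γ / 2 := by linarith
  have hnn : 0 ≤ cS1 γ k := by
    unfold cS1
    have h1 := psiHarm_nonneg (k + 1)
    have h2 := psiHarm_nonneg k
    positivity
  rw [abs_of_nonneg hnn, cS1]
  have hpow : (γ / 2) ^ (2 * k + 1) = (γ / 2) * ((γ / 2) ^ 2) ^ k := by
    rw [← pow_mul, pow_succ]; ring
  have hψ1 : psiHarm (k + 1) ≤ (k + 1 : ℝ) := by
    have := psiHarm_le (k + 1); push_cast at this ⊢; linarith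
  have hψ2 : psiHarm k ≤ (k + 1 : ℝ) := by
    have := psiHarm_le k; push_cast at this ⊢; linarith
  have key : (psiHarm (k + 1) + psiHarm k) / ((k.factorial : ℝ) * ((k + 1).factorial : ℝ))
      ≤ 2 / k.factorial := by
    rw [div_le_div_iff₀ (by positivity) (fact_pos' k), fact_succ_cast]
    have h1 := fact_one_le k
    have h2 := fact_pos' k
    have h3 : (0:ℝ) < (k + 1 : ℝ) := by positivity
    have h4 : (1:ℝ) ≤ (k + 1 : ℝ) * (k.factorial : ℝ) := by nlinarith
    nlinarith [mul_le_mul_of_nonneg_right (add_le_add hψ1 hψ2) h2.le,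
      mul_pos h3 h2, sq_nonneg ((k.factorial : ℝ) - 1)]
  calc (psiHarm (k + 1) + psiHarm k) / ((k.factorial : ℝ) * ((k + 1).factorial : ℝ)) *
        (γ / 2) ^ (2 * k + 1)
      ≤ (2 / k.factorial) * (γ / 2) ^ (2 * k + 1) := by
        exact mul_le_mul_of_nonneg_right key (by positivity)
    _ = (2 * (γ / 2)) * ((γ / 2) ^ 2) ^ k / k.factorial := by rw [hpow]; ring

private lemma besselI0_eq_gs (γ r : ℝ) :
    besselI0 (γ * r) = gs (cd0 γ) (fun k => 2 * k) r := by
  unfold besselI0 gs cd0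
  apply tsum_congr; intro k
  rw [show γ * r / 2 = (γ / 2) * r by ring, mul_pow]
  ring

private lemma besselI1_eq_gs (γ r : ℝ) :
    besselI1 (γ * r) = gs (cd1 γ) (fun k => 2 * k + 1) r := by
  unfold besselI1 gs cd1
  apply tsum_congr; intro k
  rw [show γ * r / 2 = (γ / 2) * r by ring, mul_pow]
  ring

private lemma besselK0_eq_gs (γ r : ℝ) :
    besselK0 (γ * r) = -(Real.log (γ * r / 2) + Real.eulerMascheroniConstant) *
      gs (cd0 γ) (fun k => 2 * k) r + gs (cS0 γ) (fun k => 2 * (k + 1)) r := by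
  unfold besselK0
  rw [besselI0_eq_gs]
  congr 1
  unfold gs cS0
  apply tsum_congr; intro k
  rw [show γ * r / 2 = (γ / 2) * r by ring, mul_pow]
  ring

private lemma besselK1_eq_gs (γ r : ℝ) :
    besselK1 (γ * r) = 1 / (γ * r) + (Real.log (γ * r / 2) + Real.eulerMascheroniConstant) *
      gs (cd1 γ) (fun k => 2 * k + 1) r - (1 / 2) * gs (cS1 γ) (fun k => 2 * k + 1) r := by
  unfold besselK1
  rw [besselI1_eq_gs]
  congr 2
  unfold gs cS1
  apply tsum_congr; intro k
  rw [show γ * r / 2 = (γ / 2) * r by ring, mul_pow]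
  ring

private lemma sum_cd0 {γ : ℝ} (hγ : 0 < γ) : Summable fun k => |cd0 γ k| :=
  summable_abs_of_le _ 1 ((γ/2)^2) (cd0_le γ hγ)

private lemma sum_cd1 {γ : ℝ} (hγ : 0 < γ) : Summable fun k => |cd1 γ k| :=
  summable_abs_of_le _ (γ/2) ((γ/2)^2) (cd1_le γ hγ)

private lemma sum_cS0 {γ : ℝ} (hγ : 0 < γ) : Summable fun k => |cS0 γ k| :=
  summable_abs_of_le _ ((γ/2)^2) ((γ/2)^2) (cS0_le γ hγ)

private lemma sum_cS1 {γ : ℝ} (hγ : 0 < γ) : Summable fun k => |cS1 γ k| :=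
  summable_abs_of_le _ (2*(γ/2)) ((γ/2)^2) (cS1_le γ hγ)

private lemma sumw_cd0 {γ : ℝ} (hγ : 0 < γ) :
    Summable fun k => |cd0 γ k| * ((fun k => 2 * k) k : ℕ) :=
  summable_abs_mul_weight _ _ 1 ((γ/2)^2) (by norm_num) (by positivity) (cd0_le γ hγ)
    (fun k => by push_cast; linarith)

private lemma sumw_cd1 {γ : ℝ} (hγ : 0 < γ) :
    Summable fun k => |cd1 γ k| * ((fun k => 2 * k + 1) k : ℕ) :=
  summable_abs_mul_weight _ _ (γ/2) ((γ/2)^2) (by positivity) (by positivity) (cd1_le γ hγ)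
    (fun k => by push_cast; linarith)

private lemma sumw_cS0 {γ : ℝ} (hγ : 0 < γ) :
    Summable fun k => |cS0 γ k| * ((fun k => 2 * (k + 1)) k : ℕ) :=
  summable_abs_mul_weight _ _ ((γ/2)^2) ((γ/2)^2) (by positivity) (by positivity) (cS0_le γ hγ)
    (fun k => by push_cast; linarith)

private lemma sumw_cS1 {γ : ℝ} (hγ : 0 < γ) :
    Summable fun k => |cS1 γ k| * ((fun k => 2 * k + 1) k : ℕ) :=
  summable_abs_mul_weight _ _ (2*(γ/2)) ((γ/2)^2) (by positivity) (by positivity) (cS1_le γ hγ)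
    (fun k => by push_cast; linarith)

private lemma gs_deriv_summable (d : ℕ → ℝ) (e : ℕ → ℕ)
    (hu : Summable fun n => |d n| * (e n : ℕ)) {r : ℝ} (hr : |r| ≤ 1) :
    Summable fun n => d n * (e n : ℝ) * r ^ (e n - 1) := by
  apply Summable.of_abs
  apply Summable.of_nonneg_of_le (fun n => abs_nonneg _) _ hu
  intro n
  rw [abs_mul, abs_mul, abs_pow, Nat.abs_cast]
  exact mul_le_of_le_one_right (by positivity) (pow_le_one₀ (abs_nonneg _) hr)

private lemma deriv_gs_I0 {γ : ℝ} (hγ : 0 < γ) {r : ℝ} (hr : |r| ≤ 1) :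
    ∑' k : ℕ, cd0 γ k * ((2 * k : ℕ) : ℝ) * r ^ (2 * k - 1) =
      γ * gs (cd1 γ) (fun k => 2 * k + 1) r := by
  have hsum : Summable fun k : ℕ => cd0 γ k * ((2 * k : ℕ) : ℝ) * r ^ (2 * k - 1) :=
    gs_deriv_summable (cd0 γ) (fun k => 2 * k) (sumw_cd0 hγ) hr
  rw [Summable.tsum_eq_zero_add hsum, gs, ← tsum_mul_left]
  have h0 : cd0 γ 0 * ((2 * 0 : ℕ) : ℝ) * r ^ (2 * 0 - 1) = 0 := by norm_num
  rw [h0, zero_add]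
  apply tsum_congr; intro k
  have he : 2 * (k + 1) - 1 = 2 * k + 1 := by omega
  rw [he]
  have hc : cd0 γ (k + 1) * ((2 * (k + 1) : ℕ) : ℝ) = γ * cd1 γ k := by
    unfold cd0 cd1
    have hp : (γ / 2) ^ (2 * (k + 1)) = (γ / 2) ^ (2 * k + 1) * (γ / 2) := by
      rw [← pow_succ]; try congr 1; try omega
    rw [hp, fact_succ_cast]
    have h1 : (k.factorial : ℝ) ≠ 0 := (fact_pos' k).ne'
    have h2 : (k + 1 : ℝ) ≠ 0 := by positivity
    push_cast
    field_simp
    try ring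
  linear_combination r ^ (2 * k + 1) * hc

private lemma deriv_gs_I1 {γ : ℝ} (hγ : 0 < γ) {r : ℝ} (hr : |r| ≤ 1) (hr0 : r ≠ 0) :
    ∑' k : ℕ, cd1 γ k * ((2 * k + 1 : ℕ) : ℝ) * r ^ (2 * k + 1 - 1) =
      γ * gs (cd0 γ) (fun k => 2 * k) r - gs (cd1 γ) (fun k => 2 * k + 1) r / r := by
  have h1 : Summable fun k : ℕ => γ * (cd0 γ k * r ^ (2 * k)) :=
    (gs_summable (cd0 γ) (fun k => 2 * k) (sum_cd0 hγ) hr).mul_left γ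
  have h2 : Summable fun k : ℕ => cd1 γ k * r ^ (2 * k + 1) / r :=
    (gs_summable (cd1 γ) (fun k => 2 * k + 1) (sum_cd1 hγ) hr).div_const r
  have key : ∀ k : ℕ, cd1 γ k * ((2 * k + 1 : ℕ) : ℝ) * r ^ (2 * k + 1 - 1) =
      γ * (cd0 γ k * r ^ (2 * k)) - cd1 γ k * r ^ (2 * k + 1) / r := by
    intro k
    have he : 2 * k + 1 - 1 = 2 * k := by omega
    have hr' : r ^ (2 * k + 1) / r = r ^ (2 * k) := by
      rw [pow_succ]; field_simp
    rw [he, mul_div_assoc, hr']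
    have hc : cd1 γ k * ((2 * k + 1 : ℕ) : ℝ) = γ * cd0 γ k - cd1 γ k := by
      unfold cd0 cd1
      have hp : (γ / 2) ^ (2 * k + 1) = (γ / 2) ^ (2 * k) * (γ / 2) := pow_succ _ _
      rw [hp, fact_succ_cast]
      have hf1 : (k.factorial : ℝ) ≠ 0 := (fact_pos' k).ne'
      have hf2 : (k + 1 : ℝ) ≠ 0 := by positivity
      push_cast
      field_simp
      try ring
    linear_combination r ^ (2 * k) * hc
  calc ∑' k : ℕ, cd1 γ k * ((2 * k + 1 : ℕ) : ℝ) * r ^ (2 * k + 1 - 1)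
      = ∑' k : ℕ, (γ * (cd0 γ k * r ^ (2 * k)) - cd1 γ k * r ^ (2 * k + 1) / r) :=
        tsum_congr key
    _ = (∑' k : ℕ, γ * (cd0 γ k * r ^ (2 * k))) - ∑' k : ℕ, cd1 γ k * r ^ (2 * k + 1) / r :=
        Summable.tsum_sub h1 h2
    _ = γ * gs (cd0 γ) (fun k => 2 * k) r - gs (cd1 γ) (fun k => 2 * k + 1) r / r := by
        rw [tsum_mul_left, tsum_div_const]; rfl

/-- Derivative of `vPoly`. -/
noncomputable def vD (a : ℕ → ℕ → ℝ) (n : ℕ) (r : ℝ) : ℝ :=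
  ∑ k ∈ Finset.range (n / 2 + 1), a n (2 * k) * (((2 * k : ℕ)) : ℝ) * r ^ (2 * k - 1)

/-- Derivative of `wPoly`. -/
noncomputable def wD (a : ℕ → ℕ → ℝ) (n : ℕ) (r : ℝ) : ℝ :=
  ∑ k ∈ Finset.range ((n - 1) / 2 + 1), a n (2 * k + 1) * (((2 * k + 1 : ℕ)) : ℝ) * r ^ (2 * k)

/-- `wPoly r = qP r * r`. -/
noncomputable def qP (a : ℕ → ℕ → ℝ) (n : ℕ) (r : ℝ) : ℝ :=
  ∑ k ∈ Finset.range ((n - 1) / 2 + 1), a n (2 * k + 1) * r ^ (2 * k)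

/-- Derivative of `qP`. -/
noncomputable def qD (a : ℕ → ℕ → ℝ) (n : ℕ) (r : ℝ) : ℝ :=
  ∑ k ∈ Finset.range ((n - 1) / 2 + 1), a n (2 * k + 1) * (((2 * k : ℕ)) : ℝ) * r ^ (2 * k - 1)

private lemma hasDerivAt_vPoly (a : ℕ → ℕ → ℝ) (n : ℕ) (r : ℝ) :
    HasDerivAt (vPoly a n) (vD a n r) r := by
  unfold vPoly vD
  apply HasDerivAt.fun_sum
  intro k _
  have h := (hasDerivAt_pow (2 * k) r).const_mul (a n (2 * k))
  exact h.congr_deriv (by push_cast; ring)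

private lemma hasDerivAt_wPoly (a : ℕ → ℕ → ℝ) (n : ℕ) (r : ℝ) :
    HasDerivAt (wPoly a n) (wD a n r) r := by
  unfold wPoly wD
  apply HasDerivAt.fun_sum
  intro k _
  have h := (hasDerivAt_pow (2 * k + 1) r).const_mul (a n (2 * k + 1))
  have he : 2 * k + 1 - 1 = 2 * k := by omega
  rw [he] at h
  exact h.congr_deriv (by push_cast; ring)

private lemma hasDerivAt_qP (a : ℕ → ℕ → ℝ) (n : ℕ) (r : ℝ) :
    HasDerivAt (qP a n) (qD a n r) r := by
  unfold qP qD
  apply HasDerivAt.fun_sum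
  intro k _
  have h := (hasDerivAt_pow (2 * k) r).const_mul (a n (2 * k + 1))
  exact h.congr_deriv (by push_cast; ring)

private lemma wPoly_eq_qP (a : ℕ → ℕ → ℝ) (n : ℕ) (r : ℝ) :
    wPoly a n r = qP a n r * r := by
  unfold wPoly qP
  rw [Finset.sum_mul]
  apply Finset.sum_congr rfl
  intro k _
  rw [pow_succ]
  ring

private lemma vTilde_eq (γ : ℝ) (a : ℕ → ℕ → ℝ) (n : ℕ) (r : ℝ) :
    vTilde γ a n r = vD a n r - γ * wPoly a n r := by
  unfold vTilde vD
  congr 1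
  rw [Finset.mul_sum,
    sum_Icc_eq_range (n / 2) (fun k => 2 * ((k : ℝ) * a n (2 * k) * r ^ (2 * k - 1)))
      (by norm_num)]
  apply Finset.sum_congr rfl
  intro k _
  push_cast
  ring

private lemma wTilde_eq (γ : ℝ) (a : ℕ → ℕ → ℝ) (n : ℕ) (r : ℝ) :
    wTilde γ a n r = wD a n r - qP a n r - γ * vPoly a n r := by
  unfold wTilde wD qP
  have h1 : (∑ k ∈ Finset.range ((n - 1) / 2 + 1),
        a n (2 * k + 1) * (((2 * k + 1 : ℕ)) : ℝ) * r ^ (2 * k)) -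
      (∑ k ∈ Finset.range ((n - 1) / 2 + 1), a n (2 * k + 1) * r ^ (2 * k)) =
      ∑ k ∈ Finset.range ((n - 1) / 2 + 1),
        2 * ((k : ℝ) * a n (2 * k + 1) * r ^ (2 * k)) := by
    rw [← Finset.sum_sub_distrib]
    apply Finset.sum_congr rfl
    intro k _
    push_cast
    ring
  rw [sub_sub, ← sub_sub, h1, ← Finset.mul_sum,
    sum_Icc_eq_range ((n - 1) / 2) (fun k => (k : ℝ) * a n (2 * k + 1) * r ^ (2 * k))
      (by norm_num)]

private lemma vPoly_split (a : ℕ → ℕ → ℝ) (n : ℕ) (ha0 : a n 0 = 1) (r : ℝ) :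
    vPoly a n r = 1 + ∑ k ∈ Finset.Icc 1 (n / 2), a n (2 * k) * r ^ (2 * k) := by
  unfold vPoly
  have hins : Finset.range (n / 2 + 1) = insert 0 (Finset.Icc 1 (n / 2)) := by
    ext k
    simp [Nat.lt_succ_iff]
    omega
  rw [hins, Finset.sum_insert (by simp)]
  simp [ha0]

/-- `Φ_n` rewritten to isolate the logarithm and the `1/z` pole. -/
noncomputable def Ffun (γ : ℝ) (a : ℕ → ℕ → ℝ) (n : ℕ) (r : ℝ) : ℝ :=
  (Real.log (γ * r / 2) + Real.eulerMascheroniConstant) *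
      (gs (cd1 γ) (fun k => 2 * k + 1) r * wPoly a n r -
        gs (cd0 γ) (fun k => 2 * k) r * vPoly a n r) +
    (gs (cS0 γ) (fun k => 2 * (k + 1)) r * vPoly a n r -
      1 / 2 * (gs (cS1 γ) (fun k => 2 * k + 1) r * wPoly a n r)) +
    1 / γ * qP a n r

private lemma Phi_eq_Ffun (γ : ℝ) (hγ : 0 < γ) (a : ℕ → ℕ → ℝ) (n : ℕ) {r : ℝ}
    (hr : r ≠ 0) : PhiFund γ a n r = Ffun γ a n r := by
  unfold PhiFund Ffun
  rw [besselK0_eq_gs, besselK1_eq_gs, wPoly_eq_qP]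
  have hγ' : γ ≠ 0 := hγ.ne'
  field_simp
  ring

private lemma Ffun_hasDerivAt (γ : ℝ) (hγ : 0 < γ) (a : ℕ → ℕ → ℝ) (n : ℕ) {r : ℝ}
    (h0 : 0 < r) (h1 : r < 1) :
    HasDerivAt (Ffun γ a n)
      (1 / r * (gs (cd1 γ) (fun k => 2 * k + 1) r * wPoly a n r -
          gs (cd0 γ) (fun k => 2 * k) r * vPoly a n r) +
        (Real.log (γ * r / 2) + Real.eulerMascheroniConstant) *
          ((γ * gs (cd0 γ) (fun k => 2 * k) r - gs (cd1 γ) (fun k => 2 * k + 1) r / r) *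
              wPoly a n r +
            gs (cd1 γ) (fun k => 2 * k + 1) r * wD a n r -
            (γ * gs (cd1 γ) (fun k => 2 * k + 1) r * vPoly a n r +
              gs (cd0 γ) (fun k => 2 * k) r * vD a n r)) +
        ((∑' k : ℕ, cS0 γ k * ((2 * (k + 1) : ℕ) : ℝ) * r ^ (2 * (k + 1) - 1)) * vPoly a n r +
          gs (cS0 γ) (fun k => 2 * (k + 1)) r * vD a n r -
          1 / 2 * ((∑' k : ℕ, cS1 γ k * ((2 * k + 1 : ℕ) : ℝ) * r ^ (2 * k + 1 - 1)) *
              wPoly a n r +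
            gs (cS1 γ) (fun k => 2 * k + 1) r * wD a n r)) +
        1 / γ * qD a n r) r := by
  have hrne : r ≠ 0 := h0.ne'
  have hrabs : |r| ≤ 1 := by rw [abs_of_pos h0]; exact h1.le
  have hrabs' : |r| < 1 := by rwa [abs_of_pos h0]
  -- the logarithmic factor
  have hlin : HasDerivAt (fun y : ℝ => γ * y / 2) (γ / 2) r := by
    simpa using ((hasDerivAt_id r).const_mul γ).div_const 2
  have hne : γ * r / 2 ≠ 0 := by positivity
  have hlog : HasDerivAt
      (fun y : ℝ => Real.log (γ * y / 2) + Real.eulerMascheroniConstant) (1 / r) r := by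
    have h := (hlin.log hne).add_const Real.eulerMascheroniConstant
    exact h.congr_deriv (by field_simp)
  -- the four series
  have hI0 : HasDerivAt (gs (cd0 γ) (fun k => 2 * k))
      (γ * gs (cd1 γ) (fun k => 2 * k + 1) r) r := by
    have h := gs_hasDerivAt (cd0 γ) (fun k => 2 * k) (sum_cd0 hγ) (sumw_cd0 hγ) hrabs'
    rwa [deriv_gs_I0 hγ hrabs] at h
  have hI1 : HasDerivAt (gs (cd1 γ) (fun k => 2 * k + 1))
      (γ * gs (cd0 γ) (fun k => 2 * k) r - gs (cd1 γ) (fun k => 2 * k + 1) r / r) r := by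
    have h := gs_hasDerivAt (cd1 γ) (fun k => 2 * k + 1) (sum_cd1 hγ) (sumw_cd1 hγ) hrabs'
    rwa [deriv_gs_I1 hγ hrabs hrne] at h
  have hS0 : HasDerivAt (gs (cS0 γ) (fun k => 2 * (k + 1)))
      (∑' k : ℕ, cS0 γ k * ((2 * (k + 1) : ℕ) : ℝ) * r ^ (2 * (k + 1) - 1)) r :=
    gs_hasDerivAt (cS0 γ) (fun k => 2 * (k + 1)) (sum_cS0 hγ) (sumw_cS0 hγ) hrabs'
  have hS1 : HasDerivAt (gs (cS1 γ) (fun k => 2 * k + 1))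
      (∑' k : ℕ, cS1 γ k * ((2 * k + 1 : ℕ) : ℝ) * r ^ (2 * k + 1 - 1)) r :=
    gs_hasDerivAt (cS1 γ) (fun k => 2 * k + 1) (sum_cS1 hγ) (sumw_cS1 hγ) hrabs'
  have hv := hasDerivAt_vPoly a n r
  have hw := hasDerivAt_wPoly a n r
  have hq := hasDerivAt_qP a n r
  exact ((hlog.mul ((hI1.mul hw).sub (hI0.mul hv))).add
    ((hS0.mul hv).sub (((hS1.mul hw)).const_mul (1 / 2)))).add (hq.const_mul (1 / γ))

private lemma deriv_Phi_eq (γ : ℝ) (hγ : 0 < γ) (a : ℕ → ℕ → ℝ) (n : ℕ) {r : ℝ}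
    (h0 : 0 < r) (h1 : r < 1) :
    deriv (PhiFund γ a n) r =
      1 / r * (gs (cd1 γ) (fun k => 2 * k + 1) r * wPoly a n r -
          gs (cd0 γ) (fun k => 2 * k) r * vPoly a n r) +
        (Real.log (γ * r / 2) + Real.eulerMascheroniConstant) *
          ((γ * gs (cd0 γ) (fun k => 2 * k) r - gs (cd1 γ) (fun k => 2 * k + 1) r / r) *
              wPoly a n r +
            gs (cd1 γ) (fun k => 2 * k + 1) r * wD a n r -
            (γ * gs (cd1 γ) (fun k => 2 * k + 1) r * vPoly a n r +
              gs (cd0 γ) (fun k => 2 * k) r * vD a n r)) +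
        ((∑' k : ℕ, cS0 γ k * ((2 * (k + 1) : ℕ) : ℝ) * r ^ (2 * (k + 1) - 1)) * vPoly a n r +
          gs (cS0 γ) (fun k => 2 * (k + 1)) r * vD a n r -
          1 / 2 * ((∑' k : ℕ, cS1 γ k * ((2 * k + 1 : ℕ) : ℝ) * r ^ (2 * k + 1 - 1)) *
              wPoly a n r +
            gs (cS1 γ) (fun k => 2 * k + 1) r * wD a n r)) +
        1 / γ * qD a n r := by
  have hequiv : PhiFund γ a n =ᶠ[nhds r] Ffun γ a n := by
    filter_upwards [Ioo_mem_nhds h0 h1] with y hy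
    exact Phi_eq_Ffun γ hγ a n hy.1.ne'
  rw [hequiv.deriv_eq, (Ffun_hasDerivAt γ hγ a n h0 h1).deriv]

private lemma algebra_id (L c1 lr I0' I1' v w vd wd qp qd S0' S1' D0' D1' g r : ℝ)
    (hr : r ≠ 0) (hL : L = c1 + lr) (hw : w = qp * r) :
    1 / r * (I1' * w - I0' * v) +
        L * ((g * I0' - I1' / r) * w + I1' * wd - (g * I1' * v + I0' * vd)) +
        (D0' * v + S0' * vd - 1 / 2 * (D1' * w + S1' * wd)) + 1 / g * qd +
        1 / r - (-lr) * (I0' * (vd - g * w) - I1' * (wd - qp - g * v)) =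
      (1 + I1' * w - I0' * v) / r -
        c1 * (I0' * (vd - g * w) - I1' * (wd - qp - g * v)) +
        (D0' * v + S0' * vd - 1 / 2 * (D1' * w + S1' * wd)) + 1 / g * qd := by
  subst hL hw
  field_simp
  ring

private lemma I0_split {γ : ℝ} (hγ : 0 < γ) {r : ℝ} (hr : |r| ≤ 1) :
    gs (cd0 γ) (fun k => 2 * k) r =
      1 + gs (fun k => cd0 γ (k + 1)) (fun k => 2 * (k + 1)) r := by
  rw [gs, Summable.tsum_eq_zero_add (gs_summable _ _ (sum_cd0 hγ) hr)]
  congr 1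
  simp [cd0]

private lemma abs_sub' (x y : ℝ) : |x - y| ≤ |x| + |y| := by
  calc |x - y| = |x + -y| := by rw [sub_eq_add_neg]
    _ ≤ |x| + |-y| := abs_add_le _ _
    _ = |x| + |y| := by rw [abs_neg]

private lemma abs_comb4 (x y z w : ℝ) : |x - y + z + w| ≤ |x| + |y| + |z| + |w| := by
  calc |x - y + z + w| ≤ |x - y + z| + |w| := abs_add_le _ _
    _ ≤ (|x - y| + |z|) + |w| := by
        have := abs_add_le (x - y) z
        linarith
    _ ≤ |x| + |y| + |z| + |w| := by
        have := abs_sub' x y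
        linarith
set_option maxHeartbeats 1600000 in
/-- As `r → 0⁺`,
`Φ_n′(r) + 1/r − ln(1/r)[I₀(γr) ṽ_n(r) − I₁(γr) w̃_n(r)] = O(r)`:
there are `δ > 0` and `c₀ ≥ 0` bounding the left-hand side by `c₀ r` for `0 < r < δ`. -/
theorem stmt_16
    (κ c : ℝ) (hκ : 0 < κ) (hc : 0 < c) (a : ℕ → ℕ → ℝ)
    (ha0 : ∀ n : ℕ, a n 0 = 1)
    (hann : ∀ n : ℕ, 1 ≤ n →
      a n n = -(betaC κ c 1 * a (n - 1) (n - 1)) / (2 * gammaC κ c * n))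
    (hrec : ∀ n k : ℕ, 1 ≤ k → k ≤ n - 1 →
      a n k = (1 / (2 * gammaC κ c * k)) *
        (4 * (((k + 1) / 2 : ℕ) : ℝ) ^ 2 * a n (k + 1) -
          ∑ m ∈ Finset.Icc (k - 1) (n - 1), betaC κ c (n - m) * a m (k - 1)))
    (hzero : ∀ n k : ℕ, n < k → a n k = 0)
    (n : ℕ) :
    ∃ δ : ℝ, 0 < δ ∧ ∃ c₀ : ℝ, 0 ≤ c₀ ∧ ∀ r : ℝ, 0 < r → r < δ →
      |deriv (PhiFund (gammaC κ c) a n) r + 1 / r -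
          Real.log (1 / r) *
            (besselI0 (gammaC κ c * r) * vTilde (gammaC κ c) a n r -
              besselI1 (gammaC κ c * r) * wTilde (gammaC κ c) a n r)| ≤ c₀ * r := by
  have hγ : 0 < gammaC κ c := div_pos hκ hc
  set γ : ℝ := gammaC κ c with hγdef
  have hγne : γ ≠ 0 := hγ.ne'
  -- constants: series tails
  set M0 := ∑' k : ℕ, |cd0 γ k| with hM0def
  set M1 := ∑' k : ℕ, |cd1 γ k| with hM1def
  set Mh0 := ∑' k : ℕ, |cd0 γ (k + 1)| with hMh0def
  set MS0 := ∑' k : ℕ, |cS0 γ k| with hMS0def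
  set MS1 := ∑' k : ℕ, |cS1 γ k| with hMS1def
  set MD0 := ∑' k : ℕ, |cS0 γ k * ((2 * (k + 1) : ℕ) : ℝ)| with hMD0def
  set MD1 := ∑' k : ℕ, |cS1 γ k * ((2 * k + 1 : ℕ) : ℝ)| with hMD1def
  -- constants: polynomial coefficients
  set Cv := ∑ k ∈ Finset.range (n / 2 + 1), |a n (2 * k)| with hCvdef
  set Cpv := ∑ k ∈ Finset.Icc 1 (n / 2), |a n (2 * k)| with hCpvdef
  set Cw := ∑ k ∈ Finset.range ((n - 1) / 2 + 1), |a n (2 * k + 1)| with hCwdef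
  set CwD := ∑ k ∈ Finset.range ((n - 1) / 2 + 1),
      |a n (2 * k + 1) * ((2 * k + 1 : ℕ) : ℝ)| with hCwDdef
  set CvD := ∑ k ∈ Finset.Icc 1 (n / 2), |a n (2 * k) * ((2 * k : ℕ) : ℝ)| with hCvDdef
  set CqD := ∑ k ∈ Finset.Icc 1 ((n - 1) / 2),
      |a n (2 * k + 1) * ((2 * k : ℕ) : ℝ)| with hCqDdef
  set c1 := Real.log (γ / 2) + Real.eulerMascheroniConstant with hc1def
  set K1 := M1 * Cw + Mh0 + Cpv + Mh0 * Cpv with hK1def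
  set K2 := M0 * (CvD + γ * Cw) + M1 * (CwD + Cw + γ * Cv) with hK2def
  set K3 := MD0 * Cv + MS0 * CvD + 1 / 2 * (MD1 * Cw + MS1 * CwD) with hK3def
  -- nonnegativity of the constants
  have hM0n : 0 ≤ M0 := tsum_nonneg fun k => abs_nonneg _
  have hM1n : 0 ≤ M1 := tsum_nonneg fun k => abs_nonneg _
  have hMh0n : 0 ≤ Mh0 := tsum_nonneg fun k => abs_nonneg _
  have hMS0n : 0 ≤ MS0 := tsum_nonneg fun k => abs_nonneg _
  have hMS1n : 0 ≤ MS1 := tsum_nonneg fun k => abs_nonneg _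
  have hMD0n : 0 ≤ MD0 := tsum_nonneg fun k => abs_nonneg _
  have hMD1n : 0 ≤ MD1 := tsum_nonneg fun k => abs_nonneg _
  have hCvn : 0 ≤ Cv := Finset.sum_nonneg fun k _ => abs_nonneg _
  have hCpvn : 0 ≤ Cpv := Finset.sum_nonneg fun k _ => abs_nonneg _
  have hCwn : 0 ≤ Cw := Finset.sum_nonneg fun k _ => abs_nonneg _
  have hCwDn : 0 ≤ CwD := Finset.sum_nonneg fun k _ => abs_nonneg _
  have hCvDn : 0 ≤ CvD := Finset.sum_nonneg fun k _ => abs_nonneg _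
  have hCqDn : 0 ≤ CqD := Finset.sum_nonneg fun k _ => abs_nonneg _
  have hK1n : 0 ≤ K1 :=
    add_nonneg (add_nonneg (add_nonneg (mul_nonneg hM1n hCwn) hMh0n) hCpvn)
      (mul_nonneg hMh0n hCpvn)
  have hK2n : 0 ≤ K2 :=
    add_nonneg (mul_nonneg hM0n (add_nonneg hCvDn (mul_nonneg hγ.le hCwn)))
      (mul_nonneg hM1n (add_nonneg (add_nonneg hCwDn hCwn) (mul_nonneg hγ.le hCvn)))
  have hK3n : 0 ≤ K3 :=
    add_nonneg (add_nonneg (mul_nonneg hMD0n hCvn) (mul_nonneg hMS0n hCvDn))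
      (mul_nonneg (by norm_num)
        (add_nonneg (mul_nonneg hMD1n hCwn) (mul_nonneg hMS1n hCwDn)))
  have hc0n : 0 ≤ K1 + |c1| * K2 + K3 + 1 / γ * CqD :=
    add_nonneg (add_nonneg (add_nonneg hK1n (mul_nonneg (abs_nonneg _) hK2n)) hK3n)
      (mul_nonneg (by positivity) hCqDn)
  refine ⟨1, one_pos, K1 + |c1| * K2 + K3 + 1 / γ * CqD, hc0n, ?_⟩
  intro r h0 h1
  have hrne : r ≠ 0 := h0.ne'
  have hrabs : |r| ≤ 1 := by rw [abs_of_pos h0]; exact h1.le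
  -- summability of the shifted / weighted coefficient sequences
  have hsumh0 : Summable fun k => |cd0 γ (k + 1)| :=
    (sum_cd0 hγ).comp_injective (add_left_injective 1)
  have hsumD0 : Summable fun k => |cS0 γ k * ((2 * (k + 1) : ℕ) : ℝ)| :=
    (sumw_cS0 hγ).congr fun k => by rw [abs_mul, Nat.abs_cast]
  have hsumD1 : Summable fun k => |cS1 γ k * ((2 * k + 1 : ℕ) : ℝ)| :=
    (sumw_cS1 hγ).congr fun k => by rw [abs_mul, Nat.abs_cast]
  -- bounds for the series
  have hbI0 : |gs (cd0 γ) (fun k => 2 * k) r| ≤ M0 := by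
    rw [hM0def]
    simpa only [pow_zero, mul_one] using
      gs_abs_le (cd0 γ) (fun k => 2 * k) (sum_cd0 hγ) 0 (fun k => Nat.zero_le _) h0.le h1.le
  have hbI1 : |gs (cd1 γ) (fun k => 2 * k + 1) r| ≤ M1 * r := by
    rw [hM1def]
    simpa only [pow_one] using gs_abs_le (cd1 γ) (fun k => 2 * k + 1) (sum_cd1 hγ) 1
      (fun k => by change 1 ≤ 2 * k + 1; omega) h0.le h1.le
  have hbS0 : |gs (cS0 γ) (fun k => 2 * (k + 1)) r| ≤ MS0 * r := by
    rw [hMS0def]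
    simpa only [pow_one] using gs_abs_le (cS0 γ) (fun k => 2 * (k + 1)) (sum_cS0 hγ) 1
      (fun k => by change 1 ≤ 2 * (k + 1); omega) h0.le h1.le
  have hbS1 : |gs (cS1 γ) (fun k => 2 * k + 1) r| ≤ MS1 * r := by
    rw [hMS1def]
    simpa only [pow_one] using gs_abs_le (cS1 γ) (fun k => 2 * k + 1) (sum_cS1 hγ) 1
      (fun k => by change 1 ≤ 2 * k + 1; omega) h0.le h1.le
  have hbh0 : |gs (fun k => cd0 γ (k + 1)) (fun k => 2 * (k + 1)) r| ≤ Mh0 * r ^ 2 := by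
    rw [hMh0def]
    exact gs_abs_le (fun k => cd0 γ (k + 1)) (fun k => 2 * (k + 1)) hsumh0 2
      (fun k => by change 2 ≤ 2 * (k + 1); omega) h0.le h1.le
  have hbD0 : |∑' k : ℕ, cS0 γ k * ((2 * (k + 1) : ℕ) : ℝ) * r ^ (2 * (k + 1) - 1)|
      ≤ MD0 * r := by
    rw [hMD0def]
    simpa only [gs, pow_one] using gs_abs_le (fun k => cS0 γ k * ((2 * (k + 1) : ℕ) : ℝ))
      (fun k => 2 * (k + 1) - 1) hsumD0 1
      (fun k => by change 1 ≤ 2 * (k + 1) - 1; omega) h0.le h1.le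
  have hbD1 : |∑' k : ℕ, cS1 γ k * ((2 * k + 1 : ℕ) : ℝ) * r ^ (2 * k + 1 - 1)| ≤ MD1 := by
    rw [hMD1def]
    simpa only [gs, pow_zero, mul_one] using
      gs_abs_le (fun k => cS1 γ k * ((2 * k + 1 : ℕ) : ℝ))
      (fun k => 2 * k + 1 - 1) hsumD1 0 (fun k => Nat.zero_le _) h0.le h1.le
  -- bounds for the polynomials
  have hbv : |vPoly a n r| ≤ Cv := by
    rw [vPoly, hCvdef]
    simpa only [pow_zero, mul_one] using
      finsum_abs_le (Finset.range (n / 2 + 1)) (fun k => a n (2 * k)) (fun k => 2 * k) 0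
      (fun k _ => Nat.zero_le _) h0.le h1.le
  have hbw : |wPoly a n r| ≤ Cw * r := by
    rw [wPoly, hCwdef]
    simpa only [pow_one] using
      finsum_abs_le (Finset.range ((n - 1) / 2 + 1)) (fun k => a n (2 * k + 1))
      (fun k => 2 * k + 1) 1 (fun k _ => by change 1 ≤ 2 * k + 1; omega) h0.le h1.le
  have hbqP : |qP a n r| ≤ Cw := by
    rw [qP, hCwdef]
    simpa only [pow_zero, mul_one] using
      finsum_abs_le (Finset.range ((n - 1) / 2 + 1)) (fun k => a n (2 * k + 1))
      (fun k => 2 * k) 0 (fun k _ => Nat.zero_le _) h0.le h1.le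
  have hbwD : |wD a n r| ≤ CwD := by
    rw [wD, hCwDdef]
    simpa only [pow_zero, mul_one] using
      finsum_abs_le (Finset.range ((n - 1) / 2 + 1))
      (fun k => a n (2 * k + 1) * ((2 * k + 1 : ℕ) : ℝ))
      (fun k => 2 * k) 0 (fun k _ => Nat.zero_le _) h0.le h1.le
  have hbvD : |vD a n r| ≤ CvD * r := by
    rw [vD, hCvDdef, ← sum_Icc_eq_range (n / 2)
      (fun k => a n (2 * k) * ((2 * k : ℕ) : ℝ) * r ^ (2 * k - 1)) (by simp)]
    simpa only [pow_one] using
      finsum_abs_le (Finset.Icc 1 (n / 2)) (fun k => a n (2 * k) * ((2 * k : ℕ) : ℝ))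
      (fun k => 2 * k - 1) 1
      (fun k hk => by
        have h := (Finset.mem_Icc.mp hk).1
        change 1 ≤ 2 * k - 1
        omega) h0.le h1.le
  have hbvD0 : |vD a n r| ≤ CvD :=
    hbvD.trans (mul_le_of_le_one_right hCvDn h1.le)
  have hbqD : |qD a n r| ≤ CqD * r := by
    rw [qD, hCqDdef, ← sum_Icc_eq_range ((n - 1) / 2)
      (fun k => a n (2 * k + 1) * ((2 * k : ℕ) : ℝ) * r ^ (2 * k - 1)) (by simp)]
    simpa only [pow_one] using
      finsum_abs_le (Finset.Icc 1 ((n - 1) / 2)) (fun k => a n (2 * k + 1) * ((2 * k : ℕ) : ℝ))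
      (fun k => 2 * k - 1) 1
      (fun k hk => by
        have h := (Finset.mem_Icc.mp hk).1
        change 1 ≤ 2 * k - 1
        omega) h0.le h1.le
  have hbpv : |∑ k ∈ Finset.Icc 1 (n / 2), a n (2 * k) * r ^ (2 * k)| ≤ Cpv * r ^ 2 := by
    rw [hCpvdef]
    exact finsum_abs_le (Finset.Icc 1 (n / 2)) (fun k => a n (2 * k)) (fun k => 2 * k) 2
      (fun k hk => by
        have h := (Finset.mem_Icc.mp hk).1
        change 2 ≤ 2 * k
        omega) h0.le h1.le
  -- rewrite the goal
  rw [besselI0_eq_gs, besselI1_eq_gs, deriv_Phi_eq γ hγ a n h0 h1, vTilde_eq, wTilde_eq,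
    show Real.log (1 / r) = -Real.log r by rw [one_div, Real.log_inv],
    algebra_id _ c1 (Real.log r) _ _ _ _ _ _ _ _ _ _ _ _ γ r hrne
      (by rw [hc1def, show γ * r / 2 = γ / 2 * r by ring,
            Real.log_mul (by positivity) hrne]; ring)
      (wPoly_eq_qP a n r)]
  -- name the pieces
  set I0v := gs (cd0 γ) (fun k => 2 * k) r with hI0vdef
  set I1v := gs (cd1 γ) (fun k => 2 * k + 1) r with hI1vdef
  set S0v := gs (cS0 γ) (fun k => 2 * (k + 1)) r with hS0vdef
  set S1v := gs (cS1 γ) (fun k => 2 * k + 1) r with hS1vdef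
  set D0v := ∑' k : ℕ, cS0 γ k * ((2 * (k + 1) : ℕ) : ℝ) * r ^ (2 * (k + 1) - 1) with hD0vdef
  set D1v := ∑' k : ℕ, cS1 γ k * ((2 * k + 1 : ℕ) : ℝ) * r ^ (2 * k + 1 - 1) with hD1vdef
  set vv := vPoly a n r with hvvdef
  set ww := wPoly a n r with hwwdef
  set vDv := vD a n r with hvDvdef
  set wDv := wD a n r with hwDvdef
  set qPv := qP a n r with hqPvdef
  set qDv := qD a n r with hqDvdef
  -- bound each of the four pieces
  have hA1 : |(1 + I1v * ww - I0v * vv) / r| ≤ K1 * r := by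
    have hXeq : 1 + I1v * ww - I0v * vv =
        I1v * ww - gs (fun k => cd0 γ (k + 1)) (fun k => 2 * (k + 1)) r -
          (∑ k ∈ Finset.Icc 1 (n / 2), a n (2 * k) * r ^ (2 * k)) -
          gs (fun k => cd0 γ (k + 1)) (fun k => 2 * (k + 1)) r *
            (∑ k ∈ Finset.Icc 1 (n / 2), a n (2 * k) * r ^ (2 * k)) := by
      rw [hI0vdef, I0_split hγ hrabs, hvvdef, vPoly_split a n (ha0 n) r]
      ring
    have hb1 : |I1v * ww| ≤ M1 * Cw * r ^ 2 := by
      rw [abs_mul]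
      calc |I1v| * |ww| ≤ (M1 * r) * (Cw * r) :=
            mul_le_mul hbI1 hbw (abs_nonneg _) (by positivity)
        _ = M1 * Cw * r ^ 2 := by ring
    have hb2 : |gs (fun k => cd0 γ (k + 1)) (fun k => 2 * (k + 1)) r *
        (∑ k ∈ Finset.Icc 1 (n / 2), a n (2 * k) * r ^ (2 * k))| ≤ Mh0 * Cpv * r ^ 2 := by
      rw [abs_mul]
      calc _ ≤ (Mh0 * r ^ 2) * (Cpv * r ^ 2) :=
            mul_le_mul hbh0 hbpv (abs_nonneg _) (by positivity)
        _ ≤ (Mh0 * r ^ 2) * Cpv :=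
            mul_le_mul_of_nonneg_left
              (mul_le_of_le_one_right hCpvn (pow_le_one₀ h0.le h1.le)) (by positivity)
        _ = Mh0 * Cpv * r ^ 2 := by ring
    have hX : |1 + I1v * ww - I0v * vv| ≤ K1 * r ^ 2 := by
      rw [hXeq]
      have htr : |I1v * ww - gs (fun k => cd0 γ (k + 1)) (fun k => 2 * (k + 1)) r -
          (∑ k ∈ Finset.Icc 1 (n / 2), a n (2 * k) * r ^ (2 * k)) -
          gs (fun k => cd0 γ (k + 1)) (fun k => 2 * (k + 1)) r *
            (∑ k ∈ Finset.Icc 1 (n / 2), a n (2 * k) * r ^ (2 * k))| ≤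
          |I1v * ww| + |gs (fun k => cd0 γ (k + 1)) (fun k => 2 * (k + 1)) r| +
          |∑ k ∈ Finset.Icc 1 (n / 2), a n (2 * k) * r ^ (2 * k)| +
          |gs (fun k => cd0 γ (k + 1)) (fun k => 2 * (k + 1)) r *
            (∑ k ∈ Finset.Icc 1 (n / 2), a n (2 * k) * r ^ (2 * k))| := by
        have t1 := abs_sub' (I1v * ww -
          gs (fun k => cd0 γ (k + 1)) (fun k => 2 * (k + 1)) r -
          (∑ k ∈ Finset.Icc 1 (n / 2), a n (2 * k) * r ^ (2 * k)))
          (gs (fun k => cd0 γ (k + 1)) (fun k => 2 * (k + 1)) r *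
            (∑ k ∈ Finset.Icc 1 (n / 2), a n (2 * k) * r ^ (2 * k)))
        have t2 := abs_sub' (I1v * ww -
          gs (fun k => cd0 γ (k + 1)) (fun k => 2 * (k + 1)) r)
          (∑ k ∈ Finset.Icc 1 (n / 2), a n (2 * k) * r ^ (2 * k))
        have t3 := abs_sub' (I1v * ww)
          (gs (fun k => cd0 γ (k + 1)) (fun k => 2 * (k + 1)) r)
        linarith
      calc _ ≤ _ := htr
        _ ≤ M1 * Cw * r ^ 2 + Mh0 * r ^ 2 + Cpv * r ^ 2 + Mh0 * Cpv * r ^ 2 := by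
            linarith [hb1, hbh0, hbpv, hb2]
        _ = K1 * r ^ 2 := by rw [hK1def]; ring
    rw [abs_div, abs_of_pos h0, div_le_iff₀ h0]
    calc |1 + I1v * ww - I0v * vv| ≤ K1 * r ^ 2 := hX
      _ = K1 * r * r := by ring
  have hbvT : |vDv - γ * ww| ≤ (CvD + γ * Cw) * r := by
    calc |vDv - γ * ww| ≤ |vDv| + |γ * ww| := abs_sub' _ _
      _ ≤ CvD * r + γ * (Cw * r) := by
          have : |γ * ww| = γ * |ww| := by rw [abs_mul, abs_of_pos hγ]
          rw [this]
          exact add_le_add hbvD (mul_le_mul_of_nonneg_left hbw hγ.le)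
      _ = (CvD + γ * Cw) * r := by ring
  have hbwT : |wDv - qPv - γ * vv| ≤ CwD + Cw + γ * Cv := by
    calc |wDv - qPv - γ * vv| ≤ |wDv - qPv| + |γ * vv| := abs_sub' _ _
      _ ≤ (|wDv| + |qPv|) + γ * |vv| := by
          have : |γ * vv| = γ * |vv| := by rw [abs_mul, abs_of_pos hγ]
          rw [this]
          exact add_le_add (abs_sub' _ _) le_rfl
      _ ≤ CwD + Cw + γ * Cv := by
          have := mul_le_mul_of_nonneg_left hbv hγ.le
          linarith [hbwD, hbqP]
  have hA2 : |I0v * (vDv - γ * ww) - I1v * (wDv - qPv - γ * vv)| ≤ K2 * r := by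
    calc |I0v * (vDv - γ * ww) - I1v * (wDv - qPv - γ * vv)|
        ≤ |I0v * (vDv - γ * ww)| + |I1v * (wDv - qPv - γ * vv)| := abs_sub' _ _
      _ ≤ M0 * ((CvD + γ * Cw) * r) + (M1 * r) * (CwD + Cw + γ * Cv) := by
          rw [abs_mul, abs_mul]
          exact add_le_add
            (mul_le_mul hbI0 hbvT (abs_nonneg _) hM0n)
            (mul_le_mul hbI1 hbwT (abs_nonneg _) (by positivity))
      _ = K2 * r := by rw [hK2def]; ring
  have hA3 : |D0v * vv + S0v * vDv - 1 / 2 * (D1v * ww + S1v * wDv)| ≤ K3 * r := by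
    have t1 : |D0v * vv| ≤ MD0 * Cv * r := by
      rw [abs_mul]
      calc |D0v| * |vv| ≤ (MD0 * r) * Cv :=
            mul_le_mul hbD0 hbv (abs_nonneg _) (by positivity)
        _ = MD0 * Cv * r := by ring
    have t2 : |S0v * vDv| ≤ MS0 * CvD * r := by
      rw [abs_mul]
      calc |S0v| * |vDv| ≤ (MS0 * r) * CvD :=
            mul_le_mul hbS0 hbvD0 (abs_nonneg _) (by positivity)
        _ = MS0 * CvD * r := by ring
    have t3 : |D1v * ww| ≤ MD1 * Cw * r := by
      rw [abs_mul]
      calc |D1v| * |ww| ≤ MD1 * (Cw * r) :=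
            mul_le_mul hbD1 hbw (abs_nonneg _) hMD1n
        _ = MD1 * Cw * r := by ring
    have t4 : |S1v * wDv| ≤ MS1 * CwD * r := by
      rw [abs_mul]
      calc |S1v| * |wDv| ≤ (MS1 * r) * CwD :=
            mul_le_mul hbS1 hbwD (abs_nonneg _) (by positivity)
        _ = MS1 * CwD * r := by ring
    calc |D0v * vv + S0v * vDv - 1 / 2 * (D1v * ww + S1v * wDv)|
        ≤ |D0v * vv + S0v * vDv| + |1 / 2 * (D1v * ww + S1v * wDv)| := abs_sub' _ _
      _ ≤ (|D0v * vv| + |S0v * vDv|) + 1 / 2 * (|D1v * ww| + |S1v * wDv|) := by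
          have h5 := abs_add_le (D0v * vv) (S0v * vDv)
          have h6 : |1 / 2 * (D1v * ww + S1v * wDv)| ≤
              1 / 2 * (|D1v * ww| + |S1v * wDv|) := by
            rw [abs_mul]
            have := abs_add_le (D1v * ww) (S1v * wDv)
            rw [show |(1:ℝ) / 2| = 1 / 2 by norm_num]
            linarith
          linarith
      _ ≤ K3 * r := by
          have hKr : K3 * r = MD0 * Cv * r + MS0 * CvD * r +
              1 / 2 * (MD1 * Cw * r) + 1 / 2 * (MS1 * CwD * r) := by rw [hK3def]; ring
          linarith [t1, t2, t3, t4]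
  have hA4 : |1 / γ * qDv| ≤ 1 / γ * CqD * r := by
    rw [abs_mul, show |1 / γ| = 1 / γ by rw [abs_of_pos (by positivity)]]
    calc 1 / γ * |qDv| ≤ 1 / γ * (CqD * r) :=
          mul_le_mul_of_nonneg_left hbqD (by positivity)
      _ = 1 / γ * CqD * r := by ring
  have habs := abs_comb4 ((1 + I1v * ww - I0v * vv) / r)
    (c1 * (I0v * (vDv - γ * ww) - I1v * (wDv - qPv - γ * vv)))
    (D0v * vv + S0v * vDv - 1 / 2 * (D1v * ww + S1v * wDv)) (1 / γ * qDv)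
  have hc1T : |c1 * (I0v * (vDv - γ * ww) - I1v * (wDv - qPv - γ * vv))| ≤ |c1| * (K2 * r) := by
    rw [abs_mul]
    exact mul_le_mul_of_nonneg_left hA2 (abs_nonneg _)
  have hfin : (K1 + |c1| * K2 + K3 + 1 / γ * CqD) * r =
      K1 * r + |c1| * (K2 * r) + K3 * r + 1 / γ * CqD * r := by ring
  rw [hfin]
  exact le_trans habs (add_le_add (add_le_add (add_le_add hA1 hc1T) hA3) hA4)
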